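/- Every simplicial fan quadruple is well-sorted. That is, if (𝔛, !𝔅, *ℭ, !*ℌ) is a fan quadruple in ℚ^n such that every cone of 𝔛 is simplicial, then for every cone ξ ∈ 𝔛 the restricted affine fan quadruple on the faces of ξ admits a (ℭ ∩ faces of ξ)-strict sorting function. -/

import Mathlib

namespace ToricPaper

open scoped BigOperators

/-- The ambient space `N_ℚ = ℚ^n`. -/
abbrev V (n : ℕ) := Fin n → ℚ

variable {n : ℕ}

/-- The cone of nonnegative rational combinations of elements of `A`. -/
def coneHull (A : Set (V n)) : Set (V n) :=
  {x | ∃ t : Finset (V n), ↑t ⊆ A ∧ ∃ c : V n → ℚ,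
    (∀ v ∈ t, 0 ≤ c v) ∧ x = ∑ v ∈ t, c v • v}

/-- A rational polyhedral cone: the cone generated by finitely many vectors. -/
def IsPolyCone (σ : Set (V n)) : Prop := ∃ S : Finset (V n), σ = coneHull (S : Set (V n))

/-- A cone is strongly convex if it contains no line. -/
def StronglyConvex (σ : Set (V n)) : Prop := ∀ x ∈ σ, -x ∈ σ → x = 0

/-- `F` is a face of `σ`, cut out by a linear functional nonnegative on `σ`. -/
def IsFaceOf (F σ : Set (V n)) : Prop :=
  ∃ m : (V n) →ₗ[ℚ] ℚ, (∀ x ∈ σ, 0 ≤ m x) ∧ F = {x ∈ σ | m x = 0}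

/-- Dimension of a cone: the rank of its linear span. -/
noncomputable def coneDim (σ : Set (V n)) : ℕ := Module.finrank ℚ (Submodule.span ℚ σ)

/-- A ray of a cone is a one-dimensional face. -/
def IsRayOf (ν σ : Set (V n)) : Prop := IsFaceOf ν σ ∧ coneDim ν = 1

/-- An abstract ray: a one-dimensional strongly convex rational polyhedral cone. -/
def IsRay (ν : Set (V n)) : Prop := IsPolyCone ν ∧ StronglyConvex ν ∧ coneDim ν = 1

/-- All faces of a cone `τ` (the affine fan induced by `τ`). -/
def faces (τ : Set (V n)) : Set (Set (V n)) := {F | IsFaceOf F τ}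

/-- The rays of a cone `τ`. -/
def raysOf (τ : Set (V n)) : Set (Set (V n)) := {ν | IsRayOf ν τ}

/-- A fan: a finite collection of strongly convex rational polyhedral cones, closed under
taking faces, such that the intersection of two cones is a face of each. -/
def IsFan (X : Set (Set (V n))) : Prop :=
  X.Finite ∧ (∀ σ ∈ X, IsPolyCone σ ∧ StronglyConvex σ) ∧
  (∀ σ ∈ X, ∀ F, IsFaceOf F σ → F ∈ X) ∧
  (∀ σ ∈ X, ∀ σ' ∈ X, IsFaceOf (σ ∩ σ') σ ∧ IsFaceOf (σ ∩ σ') σ')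

/-- The rays (one-dimensional cones) belonging to a collection of cones. -/
def raysIn (X : Set (Set (V n))) : Set (Set (V n)) := {ν | ν ∈ X ∧ coneDim ν = 1}

/-- The support of a collection of cones. -/
def support (X : Set (Set (V n))) : Set (V n) := ⋃₀ X

/-- The data of a fan quadruple `(X, !B, *C, !*H)`: three pairwise disjoint sets of rays. -/
def IsQuadData (X B C H : Set (Set (V n))) : Prop :=
  B ⊆ raysIn X ∧ C ⊆ raysIn X ∧ H ⊆ raysIn X ∧ Disjoint B C ∧ Disjoint B H ∧ Disjoint C H

/-- The data of a fan triple `(X, !B, *C)`: two disjoint sets of rays. -/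
def IsTripleData (X B C : Set (Set (V n))) : Prop :=
  B ⊆ raysIn X ∧ C ⊆ raysIn X ∧ Disjoint B C

/-- `ρ` is a sorting function for the (restricted) quadruple on the faces of `ξ`:
nonnegative on rays of `ξ` in `B`, nonpositive on rays of `ξ` in `C`, zero on rays of `ξ`
in none of `B`, `C`, `H`. -/
def IsSortingOn (ξ : Set (V n)) (B C H : Set (Set (V n))) (ρ : (V n) →ₗ[ℚ] ℚ) : Prop :=
  (∀ ν, IsRayOf ν ξ → ν ∈ B → ∀ x ∈ ν, 0 ≤ ρ x) ∧
  (∀ ν, IsRayOf ν ξ → ν ∈ C → ∀ x ∈ ν, ρ x ≤ 0) ∧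
  (∀ ν, IsRayOf ν ξ → ν ∉ B → ν ∉ C → ν ∉ H → ∀ x ∈ ν, ρ x = 0)

/-- The (restricted) affine quadruple on the faces of `ξ` admits a `Cf`-strict sorting
function: a sorting function which is moreover negative on `ν ∖ {0}` for every `ν ∈ Cf`. -/
def HasStrictSortingOn (ξ : Set (V n)) (B C H Cf : Set (Set (V n))) : Prop :=
  ∃ ρ : (V n) →ₗ[ℚ] ℚ, IsSortingOn ξ B C H ρ ∧
    ∀ ν, IsRayOf ν ξ → ν ∈ Cf → ∀ x ∈ ν, x ≠ 0 → ρ x < 0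

/-- A cone `ξ` is `E`-unsettled if no ray of `ξ` lies in `E`. -/
def Unsettled (E : Set (Set (V n))) (ξ : Set (V n)) : Prop := ∀ ν, IsRayOf ν ξ → ν ∉ E

/-- The quadruple `(X, !B, *C, !*H)` is `(Bs, Cf, Hs)`-sorted. -/
def SortedOn (X B C H Bs Cf Hs : Set (Set (V n))) : Prop :=
  ∀ ξ ∈ X, Unsettled ((B \ Bs) ∪ (H \ Hs)) ξ → HasStrictSortingOn ξ B C H Cf

/-- Partially-sorted: `(∅, C, ∅)`-sorted. -/
def PartiallySortedOn (X B C H : Set (Set (V n))) : Prop := SortedOn X B C H ∅ C ∅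

/-- Well-sorted: `(B, C, H)`-sorted. -/
def WellSortedOn (X B C H : Set (Set (V n))) : Prop := SortedOn X B C H B C H

/-- A simplicial cone is generated by linearly independent vectors. -/
def IsSimplicialCone (σ : Set (V n)) : Prop :=
  ∃ S : Finset (V n), LinearIndependent ℚ (fun v : S => (v : V n)) ∧
    σ = coneHull (S : Set (V n))

/-- A collection of cones is `E`-simplicial: every cone having a ray of `E` as a face is the
join of that ray with a cone of the collection of one less dimension. -/
def ESimplicialOn (X E : Set (Set (V n))) : Prop :=
  ∀ ν ∈ E, ∀ σ ∈ X, IsFaceOf ν σ →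
    ∃ ζ ∈ X, σ = coneHull (ζ ∪ ν) ∧ coneDim σ = coneDim ζ + 1

/-- A subdivision of a fan: a fan with the same support, every cone of which is contained in
a cone of the base. -/
def IsSubdivision (X' X : Set (Set (V n))) : Prop :=
  IsFan X' ∧ support X' = support X ∧ ∀ σ' ∈ X', ∃ σ ∈ X, σ' ⊆ σ

/-- A subdivision is efficient if it introduces no new rays. -/
def IsEfficient (X' X : Set (Set (V n))) : Prop := raysIn X' = raysIn X

/-- `ψ` is a good (convex piecewise-linear) function for the subdivision `X'` relative to the
cones of the base fan `X`: on each cone `τ` of `X`, `ψ` is convex, linear on each cone of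
`X'` contained in `τ`, and the maximal subcones of linearity of `ψ` inside `τ` are exactly
the cones of `X'` (i.e. any convex subset of `τ` on which `ψ` is linear lies in one of them). -/
def IsGoodFor (X X' : Set (Set (V n))) (ψ : V n → ℚ) : Prop :=
  ∀ τ ∈ X, ConvexOn ℚ τ ψ ∧
    (∀ σ' ∈ X', σ' ⊆ τ → ∃ m : (V n) →ₗ[ℚ] ℚ, ∀ x ∈ σ', ψ x = m x) ∧
    (∀ (m : (V n) →ₗ[ℚ] ℚ) (t : Set (V n)), t ⊆ τ → Convex ℚ t →
      (∀ x ∈ t, ψ x = m x) → ∃ σ' ∈ X', σ' ⊆ τ ∧ t ⊆ σ')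

/-- Sign conditions of a good sorting function with respect to the quadruple data on `X'`. -/
def SignedOn (X' B' C' H' : Set (Set (V n))) (ψ : V n → ℚ) : Prop :=
  (∀ ν ∈ B', ∀ x ∈ ν, 0 ≤ ψ x) ∧ (∀ ν ∈ C', ∀ x ∈ ν, ψ x ≤ 0) ∧
  (∀ ν ∈ raysIn X', ν ∉ B' → ν ∉ C' → ν ∉ H' → ∀ x ∈ ν, ψ x = 0)

/-- Sign conditions restricted to the rays contained in a cone `τ`. -/
def SignedOnIn (τ : Set (V n)) (X' B' C' H' : Set (Set (V n))) (ψ : V n → ℚ) : Prop :=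
  (∀ ν ∈ B', ν ⊆ τ → ∀ x ∈ ν, 0 ≤ ψ x) ∧ (∀ ν ∈ C', ν ⊆ τ → ∀ x ∈ ν, ψ x ≤ 0) ∧
  (∀ ν ∈ raysIn X', ν ⊆ τ → ν ∉ B' → ν ∉ C' → ν ∉ H' → ∀ x ∈ ν, ψ x = 0)

/-- A convex subdivision, with respect to a fan quadruple structure on `X'`. -/
def IsConvexSubdiv (X' X B' C' H' : Set (Set (V n))) : Prop :=
  IsSubdivision X' X ∧ ∃ ψ : V n → ℚ, IsGoodFor X X' ψ ∧ SignedOn X' B' C' H' ψ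

/-- A locally-convex subdivision: for each cone of the base there is a good sorting function
on that cone. -/
def IsLocallyConvexSubdiv (X' X B' C' H' : Set (Set (V n))) : Prop :=
  IsSubdivision X' X ∧
    ∀ τ ∈ X, ∃ ψ : V n → ℚ, IsGoodFor {τ} X' ψ ∧ SignedOnIn τ X' B' C' H' ψ

/-- Star subdivision of `X` at a ray `ν` contained in the support of `X`. -/
def starSubdiv (X : Set (Set (V n))) (ν : Set (V n)) : Set (Set (V n)) :=
  {σ | σ ∈ X ∧ ¬ ν ⊆ σ} ∪
  {τ | ∃ σ ∈ X, ν ⊆ σ ∧ ∃ ξ, IsFaceOf ξ σ ∧ ¬ ν ⊆ ξ ∧ τ = coneHull (ξ ∪ ν)}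

/-- The set `S` of facets used in the extension construction `Ext(𝔗, ν)`. -/
noncomputable def extS (τ ν : Set (V n)) : Set (Set (V n)) :=
  if coneDim (coneHull (τ ∪ ν)) = coneDim τ + 1 then {τ}
  else {ζ | (IsFaceOf ζ τ ∧ coneDim ζ + 1 = coneDim τ) ∧
    ∃ m : (V n) →ₗ[ℚ] ℚ, (∀ x ∈ ζ, m x = 0) ∧ (∃ v ∈ ν, v ≠ 0 ∧ m v = -1) ∧
      ∀ x ∈ τ, x ∉ ζ → 0 < m x}

/-- All faces of cones of `extS τ ν`. -/
noncomputable def extFaces (τ ν : Set (V n)) : Set (Set (V n)) :=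
  {ξ | ∃ ζ ∈ extS τ ν, IsFaceOf ξ ζ}

/-- The extension `Ext(𝔗, ν)` of the affine fan of `τ` by the ray `ν`. -/
noncomputable def Ext (τ ν : Set (V n)) : Set (Set (V n)) :=
  {ν} ∪ faces τ ∪ (fun ξ => coneHull (ξ ∪ ν)) '' extFaces τ ν

/-- The extension `Ext(𝔗', ν)` of a subdivision `𝒯'` of the affine fan of `τ` by the ray
`ν`. -/
noncomputable def ExtSub (T' : Set (Set (V n))) (τ ν : Set (V n)) : Set (Set (V n)) :=
  {ν} ∪ T' ∪ (fun ξ => coneHull (ξ ∪ ν)) ''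
    {ξ | ∃ ζ' ∈ T', (∃ ζ ∈ extS τ ν, ζ' ⊆ ζ) ∧ IsFaceOf ξ ζ'}

/-- Sequential convexity of a sequence of star subdivisions (the list gives the rays in the
order in which the star subdivisions are performed). -/
def SeqConvex (B C H : Set (Set (V n))) : Set (Set (V n)) → List (Set (V n)) → Prop
  | _, [] => True
  | X, ν :: rest =>
      IsLocallyConvexSubdiv (starSubdiv X ν) X B C H ∧
      SeqConvex B C H (starSubdiv X ν) rest

/-- The ray generated by a single vector. -/
def raySet (v : V n) : Set (V n) := {x | ∃ c : ℚ, 0 ≤ c ∧ x = c • v}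

lemma mem_coneHull_finset {S : Finset (V n)} {x : V n} :
    x ∈ coneHull (↑S : Set (V n)) ↔
      ∃ c : V n → ℚ, (∀ v ∈ S, 0 ≤ c v) ∧ x = ∑ v ∈ S, c v • v := by
  constructor
  · rintro ⟨t, hts, c, hc, rfl⟩
    have htS : t ⊆ S := fun v hv => hts hv
    refine ⟨fun v => if v ∈ t then c v else 0, ?_, ?_⟩
    · intro v hv
      by_cases h : v ∈ t
      · simpa [h] using hc v h
      · simp [h]
    · rw [← Finset.sum_subset htS]
      · exact Finset.sum_congr rfl (fun v hv => by simp [hv])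
      · intro v hv hvt; simp [hvt]
  · rintro ⟨c, hc, rfl⟩
    exact ⟨S, subset_rfl, c, hc, rfl⟩

lemma gen_mem_coneHull {S : Finset (V n)} {v : V n} (hv : v ∈ S) :
    v ∈ coneHull (↑S : Set (V n)) := by
  rw [mem_coneHull_finset]
  refine ⟨fun w => if w = v then 1 else 0, fun w _ => by positivity, ?_⟩
  rw [Finset.sum_congr rfl (g := fun w => if w = v then v else 0)
    (fun w _ => by by_cases h : w = v <;> simp [h]), Finset.sum_ite_eq' S v fun _ => v]
  simp [hv]

lemma ray_structure {S : Finset (V n)}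
    (hli : LinearIndependent ℚ (fun v : S => (v : V n)))
    {ν : Set (V n)} (hν : IsRayOf ν (coneHull (↑S : Set (V n)))) :
    ∃ v ∈ S, ν = raySet v := by
  obtain ⟨⟨m, hm, hνeq⟩, hdim⟩ := hν
  -- membership decomposition for points of ν
  have key : ∀ x ∈ ν, ∃ c : V n → ℚ, (∀ v ∈ S, 0 ≤ c v) ∧ x = ∑ v ∈ S, c v • v ∧
      ∀ v ∈ S, c v ≠ 0 → v ∈ ν := by
    intro x hx
    rw [hνeq] at hx
    obtain ⟨hxσ, hmx⟩ := hx
    obtain ⟨c, hc, hxe⟩ := mem_coneHull_finset.mp hxσ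
    refine ⟨c, hc, hxe, ?_⟩
    have hsum : ∑ v ∈ S, c v * m v = 0 := by
      rw [← hmx, hxe, map_sum]
      exact Finset.sum_congr rfl (fun v _ => by rw [map_smul, smul_eq_mul])
    have hterm : ∀ v ∈ S, c v * m v = 0 := by
      rw [← Finset.sum_eq_zero_iff_of_nonneg
        (fun v hv => mul_nonneg (hc v hv) (hm v (gen_mem_coneHull hv)))]
      exact hsum
    intro v hv hcv
    have hmv : m v = 0 := by
      have := hterm v hv
      rcases mul_eq_zero.mp this with h | h
      · exact absurd h hcv
      · exact h
    rw [hνeq]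
    exact ⟨gen_mem_coneHull hv, hmv⟩
  -- ν contains a nonzero element
  have hx0 : ∃ x ∈ ν, x ≠ 0 := by
    by_contra h
    push_neg at h
    have hsub : ν ⊆ (⊥ : Submodule ℚ (V n)) := by
      intro x hx
      simp [h x hx]
    have : Submodule.span ℚ ν = ⊥ := le_bot_iff.mp ((Submodule.span_le).mpr hsub)
    rw [coneDim, this, finrank_bot] at hdim
    omega
  obtain ⟨x₀, hx₀ν, hx₀⟩ := hx0
  obtain ⟨c, hc, hxe, hcv⟩ := key x₀ hx₀ν
  -- find a generator in ν
  have hv₀ : ∃ v₀ ∈ S, c v₀ ≠ 0 ∧ v₀ ∈ ν := by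
    by_contra h
    push_neg at h
    apply hx₀
    rw [hxe]
    apply Finset.sum_eq_zero
    intro v hv
    by_cases hcz : c v = 0
    · simp [hcz]
    · exact absurd (hcv v hv hcz) (h v hv hcz)
  obtain ⟨v₀, hv₀S, hcv₀, hv₀ν⟩ := hv₀
  have hv₀ne : v₀ ≠ 0 := hli.ne_zero ⟨v₀, hv₀S⟩
  -- uniqueness: any generator in ν equals v₀
  have huniq : ∀ v ∈ S, v ∈ ν → v = v₀ := by
    intro v hvS hvν
    by_contra hne
    have hvne : v ≠ 0 := hli.ne_zero ⟨v, hvS⟩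
    -- v and v₀ are linearly dependent in span ν
    set W := Submodule.span ℚ ν with hW
    have hvW : v ∈ W := Submodule.subset_span hvν
    have hv₀W : v₀ ∈ W := Submodule.subset_span hv₀ν
    have hnotli : ¬ LinearIndependent ℚ ![(⟨v, hvW⟩ : W), ⟨v₀, hv₀W⟩] := by
      intro hpair
      have h2 := hpair.fintype_card_le_finrank
      simp only [Fintype.card_fin] at h2
      have h1 : Module.finrank ℚ W = 1 := hdim
      omega
    rw [LinearIndependent.pair_iff] at hnotli
    push_neg at hnotli
    obtain ⟨s, t, hst, hst0⟩ := hnotli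
    have hst' : s • v + t • v₀ = 0 := by
      have := congrArg (Subtype.val) hst
      simpa using this
    -- contradict linear independence of S
    have hli' := Fintype.linearIndependent_iff.mp hli
    set iv : {x // x ∈ S} := ⟨v, hvS⟩ with hiv
    set iv₀ : {x // x ∈ S} := ⟨v₀, hv₀S⟩ with hiv₀
    have hivne : iv ≠ iv₀ := fun h => hne (congrArg Subtype.val h)
    have hivne' : iv₀ ≠ iv := hivne.symm
    set g : {x // x ∈ S} → ℚ := fun i => if i = iv then s else if i = iv₀ then t else 0
      with hg
    have hsum : ∑ i, g i • (i : V n) = s • v + t • v₀ := by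
      have : ∀ i : {x // x ∈ S},
          g i • (i : V n) = (if i = iv then s • v else 0) + (if i = iv₀ then t • v₀ else 0) := by
        intro i
        by_cases h1 : i = iv
        · have h2 : i ≠ iv₀ := h1 ▸ hivne
          simp [hg, h1, h2, hivne]; rfl
        · by_cases h2 : i = iv₀
          · simp [hg, h1, h2, hivne']; rfl
          · simp [hg, h1, h2]
      rw [Finset.sum_congr rfl (fun i _ => this i), Finset.sum_add_distrib,
        Finset.sum_ite_eq' Finset.univ iv (fun _ => s • v),
        Finset.sum_ite_eq' Finset.univ iv₀ (fun _ => t • v₀)]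
      simp
    have hzero := hli' g (by rw [hsum, hst'])
    have hs0 : s = 0 := by simpa [hg] using hzero iv
    have ht0 : t = 0 := by simpa [hg, hivne'] using hzero iv₀
    exact hst0 hs0 ht0
  -- conclude ν = raySet v₀
  refine ⟨v₀, hv₀S, ?_⟩
  ext x
  constructor
  · intro hx
    obtain ⟨d, hd, hxd, hdv⟩ := key x hx
    refine ⟨d v₀, hd v₀ hv₀S, ?_⟩
    rw [hxd, Finset.sum_congr rfl (g := fun v => if v = v₀ then d v₀ • v₀ else 0)
      (fun v hv => ?_), Finset.sum_ite_eq' S v₀ (fun _ => d v₀ • v₀)]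
    · simp [hv₀S]
    · by_cases h : v = v₀
      · simp [h]
      · have : d v = 0 := by
          by_contra hdz
          exact h (huniq v hv (hdv v hv hdz))
        simp [h, this]
  · rintro ⟨d, hd, rfl⟩
    rw [hνeq]
    constructor
    · rw [mem_coneHull_finset]
      refine ⟨fun w => if w = v₀ then d else 0, fun w _ => by positivity, ?_⟩
      rw [Finset.sum_congr rfl (g := fun w => if w = v₀ then d • v₀ else 0)
        (fun w _ => by by_cases h : w = v₀ <;> simp [h]),
        Finset.sum_ite_eq' S v₀ (fun _ => d • v₀)]
      simp [hv₀S]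
    · have hmv₀ : m v₀ = 0 := by
        rw [hνeq] at hv₀ν
        exact hv₀ν.2
      simp [map_smul, hmv₀]

/-- Every simplicial fan quadruple is well-sorted. -/
theorem simplicial_fan_quadruple_is_wellSorted {n : ℕ} (X B C H : Set (Set (V n)))
    (hFan : IsFan X) (hQ : IsQuadData X B C H)
    (hsimp : ∀ σ ∈ X, IsSimplicialCone σ) :
    WellSortedOn X B C H := by
  intro ξ hξ _
  obtain ⟨S, hli, rfl⟩ := hsimp ξ hξ
  classical
  -- linear independence as a set
  have hli' : LinearIndepOn ℚ id (↑S : Set (V n)) := hli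
  -- target values on the generators
  set f : V n → ℚ := fun v => if raySet v ∈ C then -1 else 0 with hf
  -- build a linear functional agreeing with f on S
  let b := Module.Basis.extend hli'
  set ρ : (V n) →ₗ[ℚ] ℚ := b.constr ℚ (fun i => f (i : V n)) with hρ
  have hρS : ∀ v ∈ S, ρ v = f v := by
    intro v hv
    have hvX : v ∈ hli'.extend (Set.subset_univ _) :=
      hli'.subset_extend _ (by simpa using hv)
    have hbv : b ⟨v, hvX⟩ = v := Module.Basis.extend_apply_self hli' ⟨v, hvX⟩
    calc ρ v = ρ (b ⟨v, hvX⟩) := by rw [hbv]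
    _ = f v := by rw [hρ, Module.Basis.constr_basis]
  -- value of ρ on points of rays
  have hval : ∀ ν, IsRayOf ν (coneHull (↑S : Set (V n))) → ∀ x ∈ ν,
      ∃ v ∈ S, ν = raySet v ∧ ∃ c : ℚ, 0 ≤ c ∧ x = c • v ∧ ρ x = c * f v := by
    intro ν hν x hx
    obtain ⟨v, hvS, hνeq⟩ := ray_structure hli hν
    obtain ⟨c, hc, hxc⟩ := hνeq ▸ hx
    exact ⟨v, hvS, hνeq, c, hc, hxc, by rw [hxc, map_smul, smul_eq_mul, hρS v hvS]⟩
  refine ⟨ρ, ⟨?_, ?_, ?_⟩, ?_⟩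
  · -- nonnegative on rays in B
    intro ν hν hνB x hx
    obtain ⟨v, hvS, hνeq, c, hc, hxc, hρx⟩ := hval ν hν x hx
    have hνC : ν ∉ C := fun h => (hQ.2.2.2.1).le_bot ⟨hνB, h⟩
    rw [hνeq] at hνC
    rw [hρx, hf]
    simp [hνC]
  · -- nonpositive on rays in C
    intro ν hν hνC x hx
    obtain ⟨v, hvS, hνeq, c, hc, hxc, hρx⟩ := hval ν hν x hx
    rw [hνeq] at hνC
    rw [hρx, hf]
    simp only [hνC, if_pos]
    nlinarith
  · -- zero on rays in none
    intro ν hν _ hνC _ x hx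
    obtain ⟨v, hvS, hνeq, c, hc, hxc, hρx⟩ := hval ν hν x hx
    rw [hνeq] at hνC
    rw [hρx, hf]
    simp [hνC]
  · -- strictly negative on rays in C
    intro ν hν hνC x hx hxne
    obtain ⟨v, hvS, hνeq, c, hc, hxc, hρx⟩ := hval ν hν x hx
    rw [hνeq] at hνC
    have hcpos : 0 < c := by
      rcases lt_or_eq_of_le hc with h | h
      · exact h
      · exact absurd (by rw [hxc, ← h, zero_smul]) hxne
    rw [hρx, hf]
    simp only [hνC, if_pos]
    nlinarith

end ToricPaper
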